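/- For every λ > 0 there exist ε₀ > 0, δ(λ) > 0 and constants C₃ > 0, C₄ > 0, all independent of (ζ, ε, k, r), such that for all δ ∈ (0, δ(λ)], all ε ∈ (0, ε₀], all k ∈ ℤ, all r ∈ ℤ \ {0}, and all ζ ∈ Ξ with X_k ∈ Γ_{δ/|r|}(β_l) and X_{k−r} ∈ Γ_{δ/|r|}(β_l), the following hold, where t := ε ⟨X_{k−r}, β_l⟩: (i) if |t − r Ω| ≥ λ then |E_{i,j}(ε, k, k−r)(ζ)| ≥ C₃ |X_k| / |r| or |E_{i,j}(ε, k, k−r)(ζ)| ≥ C₃ |X_{k−r}|; (ii) if |t − r Ω| < λ then |X_k| ≤ C₄ |r| / ε. -/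

import Mathlib

set_option maxHeartbeats 1000000


noncomputable section

open scoped RealInnerProductSpace

/-- `ℝ³` with the Euclidean norm, coordinates `ζ = (σ, γ, η) = (ζ 0, ζ 1, ζ 2)`. -/
abbrev E3 : Type := EuclideanSpace ℝ (Fin 3)

/-- The frequency set `Ξ := {ζ ∈ ℝ³ : γ ≥ 0} \ {0}`. -/
def Xi : Set E3 := {ζ : E3 | 0 ≤ ζ 1 ∧ ζ ≠ 0}

/-- The cone `Γ_δ(β) := {ζ ∈ Ξ : |ζ/|ζ| − β| ≤ δ or |ζ/|ζ| + β| ≤ δ}`. -/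
def cone (β : E3) (δ : ℝ) : Set E3 :=
  {ζ : E3 | ζ ∈ Xi ∧ (‖‖ζ‖⁻¹ • ζ - β‖ ≤ δ ∨ ‖‖ζ‖⁻¹ • ζ + β‖ ≤ δ)}

/-- `X_k := ζ + (k/ε) β_l`. -/
def Xk (βl ζ : E3) (ε : ℝ) (k : ℤ) : E3 := ζ + (((k : ℝ)) / ε) • βl

/-- A bi-infinite integer sequence is admissible if it is strictly increasing or
strictly decreasing. -/
def Admissible (k : ℤ → ℤ) : Prop := StrictMono k ∨ StrictAnti k

/-- The oscillatory exponent `E_{i,j}(ε, k, k−r)(ζ) := ω_i(X_k) − (r/ε) ω_N(β_l) − ω_j(X_{k−r})`. -/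
def Eij (ωi ωj ωN : E3 → ℂ) (βl : E3) (ε : ℝ) (k r : ℤ) (ζ : E3) : ℂ :=
  ωi (Xk βl ζ ε k) - ((r : ℂ) / (ε : ℂ)) * ωN βl - ωj (Xk βl ζ ε (k - r))

/-- For every `λ > 0` there are `ε₀, δ(λ), C₃, C₄ > 0`, independent of `(ζ, ε, k, r)`, such that
whenever `X_k, X_{k−r} ∈ Γ_{δ/|r|}(β_l)`, setting `t := ε ⟨X_{k−r}, β_l⟩`:
(i) if `|t − rΩ| ≥ λ` then `|E_{i,j}| ≥ C₃|X_k|/|r|` or `|E_{i,j}| ≥ C₃|X_{k−r}|`;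
(ii) if `|t − rΩ| < λ` then `|X_k| ≤ C₄|r|/ε`. -/
lemma unit_key (βl u : E3) (hβlu : ‖βl‖ = 1) (hun : ‖u‖ = 1) (δ' : ℝ) (hδ'1 : δ' ≤ 1)
    (hcone : ‖u - βl‖ ≤ δ' ∨ ‖u + βl‖ ≤ δ') :
    ‖u - ⟪u, βl⟫ • βl‖ ≤ δ' ∧ 1/2 ≤ |⟪u, βl⟫| := by
  set q : ℝ := ⟪u, βl⟫ with hq
  have key : ∀ s : ℝ, |s| = 1 → ‖u - s • βl‖ ≤ δ' → ‖u - q • βl‖ ≤ δ' ∧ 1/2 ≤ |q| := by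
    intro s hs hsd
    have h1 : ‖u - q • βl‖ ^ 2 = 1 - q ^ 2 := by
      rw [norm_sub_sq_real, real_inner_smul_right, norm_smul, hun, hβlu, ← hq]
      simp [sq_abs]
      ring
    have h2 : ‖u - s • βl‖ ^ 2 = 2 - 2 * s * q := by
      rw [norm_sub_sq_real, real_inner_smul_right, norm_smul, hun, hβlu, ← hq]
      rw [Real.norm_eq_abs, hs]
      ring
    have hd0 : 0 ≤ δ' := le_trans (norm_nonneg _) hsd
    have h3 : ‖u - s • βl‖ ^ 2 ≤ δ' ^ 2 := pow_le_pow_left₀ (norm_nonneg _) hsd 2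
    have hs2 : s^2 = 1 := by nlinarith [sq_abs s]
    have hsq2 : s^2 * q^2 = q^2 := by rw [hs2]; ring
    have h4 : ‖u - q • βl‖ ^ 2 ≤ δ' ^ 2 := by nlinarith [sq_nonneg (1 - s*q)]
    constructor
    · nlinarith [norm_nonneg (u - q • βl)]
    · have : 2 - 2*s*q ≤ 1 := by nlinarith
      have hsq3 : 1/2 ≤ s * q := by linarith
      calc (1:ℝ)/2 ≤ s*q := hsq3
        _ ≤ |s*q| := le_abs_self _
        _ = |q| := by rw [abs_mul, hs, one_mul]
  rcases hcone with h | h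
  · exact key 1 (by simp) (by simpa using h)
  · refine key (-1) (by simp) ?_
    have : u - (-1 : ℝ) • βl = u + βl := by
      simp [sub_eq_add_neg]
    rw [this]; exact h

lemma cone_est (βl : E3) (hβlu : ‖βl‖ = 1) (δ' : ℝ) (hδ'1 : δ' ≤ 1) (v : E3)
    (hv : v ∈ cone βl δ') :
    ‖v - ⟪v, βl⟫ • βl‖ ≤ δ' * ‖v‖ ∧ ‖v‖ / 2 ≤ |⟪v, βl⟫| := by
  obtain ⟨⟨-, hvne⟩, hcone⟩ := hv
  have hn : (0:ℝ) < ‖v‖ := norm_pos_iff.mpr hvne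
  have hun : ‖(‖v‖⁻¹ • v : E3)‖ = 1 := by
    rw [norm_smul, norm_inv, norm_norm, inv_mul_cancel₀ hn.ne']
  obtain ⟨hm1, hm2⟩ := unit_key βl (‖v‖⁻¹ • v) hβlu hun δ' hδ'1 hcone
  have hiq : ⟪(‖v‖⁻¹ • v : E3), βl⟫ = ‖v‖⁻¹ * ⟪v, βl⟫ := real_inner_smul_left _ _ _
  rw [hiq] at hm1 hm2
  constructor
  · have h5 : ‖v‖ • ((‖v‖⁻¹ • v : E3) - (‖v‖⁻¹ * ⟪v, βl⟫) • βl) = v - ⟪v, βl⟫ • βl := by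
      rw [smul_sub, smul_smul, smul_smul, mul_inv_cancel₀ hn.ne', one_smul,
        ← mul_assoc, mul_inv_cancel₀ hn.ne', one_mul]
    calc ‖v - ⟪v, βl⟫ • βl‖ = ‖v‖ * ‖(‖v‖⁻¹ • v : E3) - (‖v‖⁻¹ * ⟪v, βl⟫) • βl‖ := by
          rw [← h5, norm_smul, norm_norm]
      _ ≤ ‖v‖ * δ' := mul_le_mul_of_nonneg_left hm1 hn.le
      _ = δ' * ‖v‖ := mul_comm _ _
  · rw [abs_mul, abs_inv, abs_of_pos hn] at hm2
    have hvv : ‖v‖ * ‖v‖⁻¹ = 1 := mul_inv_cancel₀ hn.ne'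
    nlinarith [mul_le_mul_of_nonneg_left hm2 hn.le, abs_nonneg ⟪v, βl⟫]

lemma lip_est (βl : E3) (L : ℝ) (hL : 0 < L) (ω : E3 → ℂ)
    (hLip : LipschitzWith (Real.toNNReal L) ω)
    (hLin : ∀ s : ℝ, ω (s • βl) = (s : ℂ) * ω βl) (v : E3) (p : ℝ) :
    ‖ω v - (p : ℂ) * ω βl‖ ≤ L * ‖v - p • βl‖ := by
  have h := hLip.dist_le_mul v (p • βl)
  rw [Complex.dist_eq, dist_eq_norm, hLin p, Real.coe_toNNReal L hL.le] at h
  exact h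

lemma main_id (wi wj wN : ℂ) (hw : wj - wi ≠ 0) (ε a : ℝ) (hε : ε ≠ 0) (r : ℤ) :
    (↑(a + (r : ℝ)/ε) : ℂ) * wi - ((r:ℂ)/(ε:ℂ)) * wN - (a:ℂ) * wj
      = ((wj - wi)/(ε:ℂ)) * ((r:ℂ) * ((wi - wN)/(wj - wi)) - ((ε * a : ℝ) : ℂ)) := by
  have hε' : (ε : ℂ) ≠ 0 := by exact_mod_cast hε
  push_cast
  field_simp
  ring

lemma arith_a (C₃ nY nZ ε R L δ A D lam M : ℝ)
    (hC3a : C₃ ≤ A/8) (hδa : L*δ*(8*lam+1) ≤ A*lam/2)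
    (hDlam : lam ≤ D) (h4 : ε*nZ ≤ 4*D) (hnYZ' : ε*nY ≤ ε*nZ + R)
    (hR1 : 1 ≤ R) (hlam : 0 < lam) (hε : 0 < ε) (hL : 0 < L) (hδ : 0 < δ)
    (hA : 0 < A) (hD0 : 0 ≤ D) (hnY0 : 0 ≤ nY) (hnZ0 : 0 ≤ nZ) (hM : 0 ≤ M) :
    C₃*nZ*(ε*R) + L*δ*ε*(nY+nZ) ≤ A*D*R := by
  have key : lam*(C₃*nZ*(ε*R) + L*δ*ε*(nY+nZ)) ≤ lam*(A*D*R) := by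
    nlinarith [mul_le_mul_of_nonneg_left hnYZ' (by positivity : (0:ℝ) ≤ lam*L*δ),
      mul_le_mul_of_nonneg_left h4 (by positivity : (0:ℝ) ≤ lam*L*δ),
      mul_le_mul_of_nonneg_left hDlam (by positivity : (0:ℝ) ≤ L*δ*R),
      mul_le_mul_of_nonneg_right hδa (by positivity : (0:ℝ) ≤ D*R),
      mul_le_mul_of_nonneg_left hR1 (by positivity : (0:ℝ) ≤ 8*lam*D*L*δ),
      mul_le_mul_of_nonneg_right hC3a (by positivity : (0:ℝ) ≤ lam*ε*nZ*R),
      mul_le_mul_of_nonneg_left h4 (by positivity : (0:ℝ) ≤ (A/8)*lam*R)]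
  exact le_of_mul_le_mul_left key hlam

lemma arith_b (C₃ nY nZ ε R L δ A D lam M : ℝ)
    (hC3b : C₃*(4*M+1) ≤ A*lam/2) (hδb : L*δ*(8*M+1) ≤ A*lam/2)
    (hDlam : lam ≤ D) (hZM : ε*nZ ≤ 4*(R*M)) (hnYZ' : ε*nY ≤ ε*nZ + R)
    (hR1 : 1 ≤ R) (hlam : 0 < lam) (hε : 0 < ε) (hL : 0 < L) (hδ : 0 < δ)
    (hA : 0 < A) (hD0 : 0 ≤ D) (hnY0 : 0 ≤ nY) (hnZ0 : 0 ≤ nZ) (hM : 0 ≤ M)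
    (hC3pos : 0 < C₃) :
    C₃*nY*ε + L*δ*ε*(nY+nZ) ≤ A*D*R := by
  have hYM : ε*nY ≤ 4*(R*M) + R := by linarith
  have key : lam*(C₃*nY*ε + L*δ*ε*(nY+nZ)) ≤ lam*(A*D*R) := by
    nlinarith [mul_le_mul_of_nonneg_left hYM (by positivity : (0:ℝ) ≤ lam*C₃),
      mul_le_mul_of_nonneg_right hC3b (by positivity : (0:ℝ) ≤ lam*R),
      mul_le_mul_of_nonneg_left hDlam (by positivity : (0:ℝ) ≤ A*lam*R/2),
      mul_le_mul_of_nonneg_left hZM (by positivity : (0:ℝ) ≤ lam*L*δ),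
      mul_le_mul_of_nonneg_left hYM (by positivity : (0:ℝ) ≤ lam*L*δ),
      mul_le_mul_of_nonneg_right hδb (by positivity : (0:ℝ) ≤ lam*R)]
  exact le_of_mul_le_mul_left key hlam

lemma arith_ii (nY nZ ε R lam M C₄ : ℝ) (hC4 : C₄ = 2*lam + 2*M + 1)
    (h1 : ε*nZ ≤ 2*(lam + R*M)) (hnYZ' : ε*nY ≤ ε*nZ + R)
    (hR1 : 1 ≤ R) (hlam : 0 < lam) (hM : 0 ≤ M) :
    nY*ε ≤ C₄*R := by
  nlinarith [mul_le_mul_of_nonneg_left hR1 hlam.le]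

theorem stmt_6 (βl : E3) (hβlu : ‖βl‖ = 1) (hβl1 : βl 1 = 0)
    (L : ℝ) (hL : 0 < L) (ωi ωj ωN : E3 → ℂ)
    (hiLip : LipschitzWith (Real.toNNReal L) ωi)
    (hjLip : LipschitzWith (Real.toNNReal L) ωj)
    (hNLip : LipschitzWith (Real.toNNReal L) ωN)
    (hiLin : ∀ s : ℝ, ωi (s • βl) = (s : ℂ) * ωi βl)
    (hjLin : ∀ s : ℝ, ωj (s • βl) = (s : ℂ) * ωj βl)
    (hNLin : ∀ s : ℝ, ωN (s • βl) = (s : ℂ) * ωN βl)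
    (hne : ωi βl ≠ ωj βl)
    (lam : ℝ) (hlam : 0 < lam) :
    ∃ ε₀ > (0 : ℝ), ∃ δlam > (0 : ℝ), ∃ C₃ > (0 : ℝ), ∃ C₄ > (0 : ℝ),
      ∀ δ : ℝ, 0 < δ → δ ≤ δlam →
      ∀ ε : ℝ, 0 < ε → ε ≤ ε₀ →
      ∀ k r : ℤ, r ≠ 0 →
      ∀ ζ ∈ Xi,
        Xk βl ζ ε k ∈ cone βl (δ / ((|r| : ℤ) : ℝ)) →
        Xk βl ζ ε (k - r) ∈ cone βl (δ / ((|r| : ℤ) : ℝ)) →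
        ((lam ≤ Norm.norm ((↑(ε * ⟪Xk βl ζ ε (k - r), βl⟫) : ℂ) -
              (r : ℂ) * ((ωi βl - ωN βl) / (ωj βl - ωi βl))) →
            C₃ * ‖Xk βl ζ ε k‖ / ((|r| : ℤ) : ℝ) ≤ Norm.norm (Eij ωi ωj ωN βl ε k r ζ) ∨
            C₃ * ‖Xk βl ζ ε (k - r)‖ ≤ Norm.norm (Eij ωi ωj ωN βl ε k r ζ)) ∧
         (Norm.norm ((↑(ε * ⟪Xk βl ζ ε (k - r), βl⟫) : ℂ) -
              (r : ℂ) * ((ωi βl - ωN βl) / (ωj βl - ωi βl))) < lam →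
            ‖Xk βl ζ ε k‖ ≤ C₄ * ((|r| : ℤ) : ℝ) / ε)) := by
  have hsub : ωj βl - ωi βl ≠ 0 := sub_ne_zero.mpr (Ne.symm hne)
  set A : ℝ := ‖ωj βl - ωi βl‖ with hAdef
  have hA : 0 < A := by
    rw [hAdef]; exact norm_pos_iff.mpr hsub
  set Om : ℂ := (ωi βl - ωN βl) / (ωj βl - ωi βl) with hOmdef
  set M : ℝ := ‖Om‖ with hMdef
  have hM : 0 ≤ M := norm_nonneg _
  refine ⟨1, one_pos,
    min 1 (min (A*lam/(2*L*(8*lam+1))) (A*lam/(2*L*(8*M+1)))), by positivity,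
    min (A/8) (A*lam/(2*(4*M+1))), by positivity,
    2*lam + 2*M + 1, by positivity, ?_⟩
  intro δ hδpos hδle ε hεpos hεle k r hr ζ hζ hYc hZc
  set C₃ : ℝ := min (A/8) (A*lam/(2*(4*M+1))) with hC3def
  have hC3pos : (0:ℝ) < C₃ := lt_min (by positivity) (by positivity)
  have hC3a : C₃ ≤ A/8 := min_le_left _ _
  have hC3b : C₃ * (4*M+1) ≤ A*lam/2 := by
    have h1 : C₃ ≤ A*lam/(2*(4*M+1)) := min_le_right _ _
    have h2 : (0:ℝ) < 4*M+1 := by linarith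
    rw [div_mul_eq_div_div] at h1
    rw [← le_div_iff₀ h2]
    exact h1
  have hδ1 : δ ≤ 1 := hδle.trans (min_le_left _ _)
  have hδa : L*δ*(8*lam+1) ≤ A*lam/2 := by
    have h1 : δ ≤ A*lam/(2*L*(8*lam+1)) := hδle.trans ((min_le_right _ _).trans (min_le_left _ _))
    have h2 : (0:ℝ) < 2*L*(8*lam+1) := by positivity
    rw [le_div_iff₀ h2] at h1
    nlinarith
  have hδb : L*δ*(8*M+1) ≤ A*lam/2 := by
    have h1 : δ ≤ A*lam/(2*L*(8*M+1)) := hδle.trans ((min_le_right _ _).trans (min_le_right _ _))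
    have h2 : (0:ℝ) < 2*L*(8*M+1) := by positivity
    rw [le_div_iff₀ h2] at h1
    nlinarith
  set R : ℝ := ((|r| : ℤ) : ℝ) with hRdef
  have hR1 : (1:ℝ) ≤ R := by
    rw [hRdef]
    exact_mod_cast Int.one_le_abs hr
  have hR0 : (0:ℝ) < R := lt_of_lt_of_le one_pos hR1
  have hRabs : |(r:ℝ)| = R := by rw [hRdef]; push_cast [Int.cast_abs]; ring
  set Y : E3 := Xk βl ζ ε k with hYdef
  set Z : E3 := Xk βl ζ ε (k - r) with hZdef
  set a : ℝ := ⟪Z, βl⟫ with hadef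
  set b : ℝ := ⟪Y, βl⟫ with hbdef
  set D : ℝ := ‖(↑(ε * a) : ℂ) - (r : ℂ) * Om‖ with hDdef
  have hD0 : 0 ≤ D := norm_nonneg _
  have hββ : ⟪βl, βl⟫ = (1:ℝ) := by
    rw [real_inner_self_eq_norm_sq, hβlu]; norm_num
  have hab : b = a + (r:ℝ)/ε := by
    rw [hbdef, hadef, hYdef, hZdef]
    unfold Xk
    rw [inner_add_left, inner_add_left, real_inner_smul_left, real_inner_smul_left, hββ]
    push_cast
    ring
  have hYZ : Y = Z + ((r:ℝ)/ε) • βl := by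
    rw [hYdef, hZdef]
    unfold Xk
    rw [add_assoc, ← add_smul]
    congr 2
    push_cast
    ring
  have hnYZ : ‖Y‖ ≤ ‖Z‖ + R/ε := by
    rw [hYZ]
    refine (norm_add_le _ _).trans ?_
    rw [norm_smul, hβlu, mul_one, Real.norm_eq_abs, abs_div, abs_of_pos hεpos, hRabs]
  have hδ'1 : δ / R ≤ 1 := by
    rw [div_le_one hR0]; linarith
  obtain ⟨hY1, hY2⟩ := cone_est βl hβlu (δ/R) hδ'1 Y hYc
  obtain ⟨hZ1, hZ2⟩ := cone_est βl hβlu (δ/R) hδ'1 Z hZc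
  rw [← hbdef] at hY1 hY2
  rw [← hadef] at hZ1 hZ2
  -- decomposition of Eij
  set Eerr : ℂ := (ωi Y - (b:ℂ) * ωi βl) - (ωj Z - (a:ℂ) * ωj βl) with hEerrdef
  have hdecomp : Eij ωi ωj ωN βl ε k r ζ
      = ((b:ℂ) * ωi βl - ((r:ℂ)/(ε:ℂ)) * ωN βl - (a:ℂ) * ωj βl) + Eerr := by
    rw [hEerrdef]
    unfold Eij
    rw [← hYdef, ← hZdef]
    ring
  have hEm : ((b:ℂ) * ωi βl - ((r:ℂ)/(ε:ℂ)) * ωN βl - (a:ℂ) * ωj βl)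
      = ((ωj βl - ωi βl)/(ε:ℂ)) * ((r:ℂ) * Om - ((ε * a : ℝ) : ℂ)) := by
    rw [hab, hOmdef]
    exact main_id (ωi βl) (ωj βl) (ωN βl) hsub ε a hεpos.ne' r
  have habs1 : ‖(b:ℂ) * ωi βl - ((r:ℂ)/(ε:ℂ)) * ωN βl - (a:ℂ) * ωj βl‖
      = A/ε * D := by
    rw [hEm, norm_mul, norm_div, Complex.norm_real, Real.norm_eq_abs, abs_of_pos hεpos, ← hAdef,
      norm_sub_rev ((r:ℂ) * Om), ← hDdef]
  have habs2 : ‖Eerr‖ ≤ L*(δ/R)*(‖Y‖+‖Z‖) := by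
    rw [hEerrdef]
    refine (norm_sub_le _ _).trans ?_
    have h1 := (lip_est βl L hL ωi hiLip hiLin Y b).trans (mul_le_mul_of_nonneg_left hY1 hL.le)
    have h2 := (lip_est βl L hL ωj hjLip hjLin Z a).trans (mul_le_mul_of_nonneg_left hZ1 hL.le)
    nlinarith
  set absE : ℝ := ‖Eij ωi ωj ωN βl ε k r ζ‖ with habsEdef
  have hElb : A/ε*D - L*(δ/R)*(‖Y‖+‖Z‖) ≤ absE := by
    have hX : ((b:ℂ) * ωi βl - ((r:ℂ)/(ε:ℂ)) * ωN βl - (a:ℂ) * ωj βl)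
        = Eij ωi ωj ωN βl ε k r ζ - Eerr := by rw [hdecomp]; ring
    have h3 : A/ε*D ≤ absE + ‖Eerr‖ := by
      rw [← habs1, hX]
      exact norm_sub_le _ _
    linarith
  have hta : ε*‖Z‖/2 ≤ |ε*a| := by
    rw [abs_mul, abs_of_pos hεpos]
    have := mul_le_mul_of_nonneg_left hZ2 hεpos.le
    linarith
  have htb : |ε*a| ≤ D + R*M := by
    have h1 : ((ε*a : ℝ) : ℂ) = (((ε*a : ℝ):ℂ) - (r:ℂ)*Om) + (r:ℂ)*Om := by ring
    calc |ε*a| = ‖((ε*a : ℝ) : ℂ)‖ := by rw [Complex.norm_real, Real.norm_eq_abs]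
      _ ≤ D + ‖(r:ℂ)*Om‖ := by
          rw [h1]; exact (norm_add_le _ _).trans (by rw [← hDdef])
      _ = D + R*M := by
          rw [norm_mul, Complex.norm_intCast, hRabs, ← hMdef]
  -- multiplied form of hElb
  have hεR : (0:ℝ) < ε*R := mul_pos hεpos hR0
  have hElb' : A*D*R ≤ ε*R*absE + L*δ*ε*(‖Y‖+‖Z‖) := by
    have h := mul_le_mul_of_nonneg_left hElb hεR.le
    have e1 : ε*R*(A/ε*D - L*(δ/R)*(‖Y‖+‖Z‖)) = A*D*R - L*δ*ε*(‖Y‖+‖Z‖) := by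
      field_simp
    rw [e1] at h
    linarith
  have hnY0 : (0:ℝ) ≤ ‖Y‖ := norm_nonneg _
  have hnZ0 : (0:ℝ) ≤ ‖Z‖ := norm_nonneg _
  have hnYZ' : ε*‖Y‖ ≤ ε*‖Z‖ + R := by
    have h := mul_le_mul_of_nonneg_left hnYZ hεpos.le
    rw [mul_add, mul_div_cancel₀ _ hεpos.ne'] at h
    exact h
  constructor
  · -- case (i)
    intro hDlam
    by_cases h4 : ε*‖Z‖ ≤ 4*D
    · right
      have key : C₃*‖Z‖*(ε*R) + L*δ*ε*(‖Y‖+‖Z‖) ≤ A*D*R :=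
        arith_a C₃ ‖Y‖ ‖Z‖ ε R L δ A D lam M hC3a hδa hDlam h4 hnYZ' hR1 hlam hεpos hL
          hδpos hA hD0 hnY0 hnZ0 hM
      have h6 : ε*R*(C₃*‖Z‖) ≤ ε*R*absE := by linarith
      exact le_of_mul_le_mul_left h6 hεR
    · left
      push_neg at h4
      have hZM : ε*‖Z‖ ≤ 4*(R*M) := by linarith
      have key : C₃*‖Y‖*ε + L*δ*ε*(‖Y‖+‖Z‖) ≤ A*D*R :=
        arith_b C₃ ‖Y‖ ‖Z‖ ε R L δ A D lam M hC3b hδb hDlam hZM hnYZ' hR1 hlam hεpos hL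
          hδpos hA hD0 hnY0 hnZ0 hM hC3pos
      have h5 : ε*R*(C₃*‖Y‖/R) = C₃*‖Y‖*ε := by field_simp
      have h6 : ε*R*(C₃*‖Y‖/R) ≤ ε*R*absE := by rw [h5]; linarith
      exact le_of_mul_le_mul_left h6 hεR
  · -- case (ii)
    intro hDlam
    rw [le_div_iff₀ hεpos]
    have h1 : ε*‖Z‖ ≤ 2*(lam + R*M) := by linarith
    exact arith_ii ‖Y‖ ‖Z‖ ε R lam M (2*lam + 2*M + 1) rfl h1 hnYZ' hR1 hlam hM

end
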